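/- Let m and n be positive integers with n ≥ 1. Then |R(n,m)| = Σ_{1 ≤ k ≤ n, gcd(k,m)=1} (n−1)(n−2)⋯(n−k+1)·|R(n−k,m)|, where the summand for k is (n−1)!/(n−k)! times |R(n−k,m)|. -/

import Mathlib

/-- `Rcard n m` is the number of permutations in `Sym(n)` whose order is coprime to `m`.
Note that `Rcard 0 m = 1`. -/
noncomputable def Rcard (n m : ℕ) : ℕ :=
  (Finset.univ.filter (fun π : Equiv.Perm (Fin n) => Nat.Coprime (orderOf π) m)).card

open Equiv Equiv.Perm Finset


lemma ofSubtype_inj {α : Type*} {p : α → Prop} [DecidablePred p] :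
    Function.Injective (Equiv.Perm.ofSubtype : Equiv.Perm (Subtype p) →* Equiv.Perm α) := by
  intro f g h
  ext x
  have := congrArg (fun π : Equiv.Perm α => π (x : α)) h
  simpa [Equiv.Perm.ofSubtype_apply_coe] using this

lemma orderOf_permCongr {α β : Type*} (e : α ≃ β) (π : Equiv.Perm α) :
    orderOf (e.permCongr π) = orderOf π := by
  let E : Equiv.Perm α ≃* Equiv.Perm β :=
    { toEquiv := e.permCongr
      map_mul' := by intro p q; ext x; simp }
  exact orderOf_injective E.toMonoidHom E.injective π

lemma filter_coprime_card_eq {α : Type*} [Fintype α] [DecidableEq α] {N m : ℕ}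
    (h : Fintype.card α = N) :
    (Finset.univ.filter (fun π : Equiv.Perm α => Nat.Coprime (orderOf π) m)).card = Rcard N m := by
  classical
  obtain e := Fintype.equivFinOfCardEq h
  refine Finset.card_bij' (fun π _ => e.permCongr π) (fun π _ => e.symm.permCongr π) ?_ ?_ ?_ ?_
  · intro π hπ
    simp only [Finset.mem_filter, Finset.mem_univ, true_and, orderOf_permCongr] at hπ ⊢
    exact hπ
  · intro π hπ
    simp only [Finset.mem_filter, Finset.mem_univ, true_and, orderOf_permCongr] at hπ ⊢
    exact hπ
  · intro π _; ext x; simp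
  · intro π _; ext x; simp

lemma fiber_card {n m k : ℕ} (hn : 1 ≤ n) (hk : 1 ≤ k) (hkn : k ≤ n)
    (t : Fin (k-1) → Fin n) (htinj : Function.Injective t)
    (htz : ∀ i, t i ≠ (⟨0, hn⟩ : Fin n)) (hkm : Nat.Coprime k m) :
    (Finset.univ.filter (fun π : Equiv.Perm (Fin n) =>
        (Nat.Coprime (orderOf π) m ∧ Function.minimalPeriod ⇑π ⟨0, hn⟩ = k)
        ∧ (fun i : Fin (k-1) => (π ^ ((i : ℕ)+1)) (⟨0, hn⟩ : Fin n)) = t)).card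
      = Rcard (n - k) m := by
  classical
  set z : Fin n := ⟨0, hn⟩ with hz
  set l : List (Fin n) := z :: List.ofFn t with hl
  have hlnd : l.Nodup := by
    refine List.nodup_cons.mpr ⟨?_, List.nodup_ofFn.mpr htinj⟩
    simp only [List.mem_ofFn, Set.mem_range, not_exists]
    exact fun i h => htz i h
  have hlen : l.length = k := by
    simp only [hl, List.length_cons, List.length_ofFn]
    omega
  set c : Equiv.Perm (Fin n) := l.formPerm with hc
  have horder_c : orderOf c = k := by
    rcases eq_or_lt_of_le hk with h1 | h2
    · have hnil : List.ofFn t = [] := List.eq_nil_of_length_eq_zero (by simp; omega)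
      rw [hc, hl, hnil, List.formPerm_singleton, orderOf_one, ← h1]
    · have h2' : 2 ≤ l.length := by omega
      have hcyc := List.isCycle_formPerm hlnd h2'
      rw [hc, hcyc.orderOf, List.support_formPerm_of_nodup l hlnd
        (fun x hx => by rw [hx] at hlen; simp at hlen; omega),
        List.toFinset_card_of_nodup hlnd, hlen]
  have hkpos : 0 < k := hk
  set w : ℕ → Fin n := fun i => l[i % k]'(by rw [hlen]; exact Nat.mod_lt _ hkpos) with hw
  have hw0 : w 0 = z := by simp [hw, Nat.zero_mod, hl]
  have hwk : w k = z := by simp [hw, Nat.mod_self, hl]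
  have hw_inj : ∀ i j, i < k → j < k → w i = w j → i = j := by
    intro i j hi hj hij
    rw [hw] at hij
    simp only [Nat.mod_eq_of_lt hi, Nat.mod_eq_of_lt hj] at hij
    exact (hlnd.getElem_inj_iff).mp hij
  have hw_t : ∀ i : Fin (k-1), w ((i : ℕ) + 1) = t i := by
    intro i
    have hi1 : (i : ℕ) + 1 < k := by omega
    simp only [hw, Nat.mod_eq_of_lt hi1, hl, List.getElem_cons_succ, List.getElem_ofFn]
  have hw_c : ∀ i, c (w i) = w (i + 1) := by
    intro i
    have h1 : i % k < l.length := by rw [hlen]; exact Nat.mod_lt _ hkpos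
    have h2 := List.formPerm_apply_getElem l hlnd (i % k) h1
    rw [hw, hc]
    have h3 : (i % k + 1) % l.length = (i + 1) % k := by
      rw [hlen]
      conv_rhs => rw [Nat.add_mod]
      simp [Nat.mod_mod_of_dvd]
    rw [h2]
    simp only [h3]
  have hwmem : ∀ i, w i ∈ l := fun i => List.getElem_mem _
  have hmem_w : ∀ x ∈ l, ∃ i, i < k ∧ x = w i := by
    intro x hx
    obtain ⟨j, hj, rfl⟩ := List.mem_iff_getElem.mp hx
    have hjk : j < k := by rwa [hlen] at hj
    exact ⟨j, hjk, by simp [hw, Nat.mod_eq_of_lt hjk]⟩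
  have horder_ofSub : ∀ σ : Equiv.Perm {x : Fin n // x ∉ l},
      orderOf (Equiv.Perm.ofSubtype σ) = orderOf σ :=
    fun σ => orderOf_injective Equiv.Perm.ofSubtype ofSubtype_inj σ
  have hdisj : ∀ σ : Equiv.Perm {x : Fin n // x ∉ l},
      c.Disjoint (Equiv.Perm.ofSubtype σ) := by
    intro σ x
    by_cases hx : x ∈ l
    · exact Or.inr (Equiv.Perm.ofSubtype_apply_of_not_mem σ (not_not_intro hx))
    · exact Or.inl (List.formPerm_apply_of_notMem hx)
  have hord : ∀ σ : Equiv.Perm {x : Fin n // x ∉ l},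
      orderOf (c * Equiv.Perm.ofSubtype σ) = Nat.lcm k (orderOf σ) := by
    intro σ
    rw [(hdisj σ).orderOf, horder_c, horder_ofSub]
  have hπw : ∀ (σ : Equiv.Perm {x : Fin n // x ∉ l}) (i : ℕ),
      ((c * Equiv.Perm.ofSubtype σ) ^ i) z = w i := by
    intro σ i
    induction i with
    | zero => rw [pow_zero, hw0]; rfl
    | succ i ih =>
      rw [pow_succ', Equiv.Perm.mul_apply, ih, Equiv.Perm.mul_apply,
        Equiv.Perm.ofSubtype_apply_of_not_mem σ (not_not_intro (hwmem i)), hw_c]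
  have hmp : ∀ σ : Equiv.Perm {x : Fin n // x ∉ l},
      Function.minimalPeriod ⇑(c * Equiv.Perm.ofSubtype σ) z = k := by
    intro σ
    set π := c * Equiv.Perm.ofSubtype σ with hπ
    have hper : Function.IsPeriodicPt ⇑π k z := by
      show (⇑π)^[k] z = z
      rw [← Equiv.Perm.coe_pow, hπw σ k, hwk]
    have hdvd := hper.minimalPeriod_dvd
    have hpos := hper.minimalPeriod_pos hkpos
    have hle := Nat.le_of_dvd hkpos hdvd
    rcases eq_or_lt_of_le hle with h | h
    · exact h
    · exfalso
      have h1 := Function.iterate_minimalPeriod (f := ⇑π) (x := z)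
      rw [← Equiv.Perm.coe_pow, hπw σ] at h1
      have := hw_inj _ 0 h hkpos (h1.trans hw0.symm)
      omega
  have hsub : Fintype.card {x : Fin n // x ∉ l} = n - k := by
    rw [Fintype.card_subtype_compl, Fintype.card_fin]
    congr 1
    have he : Fintype.card {x : Fin n // x ∈ l} = l.toFinset.card :=
      Fintype.card_of_subtype l.toFinset (by simp)
    rw [he, List.toFinset_card_of_nodup hlnd, hlen]
  have key : (Finset.univ.filter (fun π : Equiv.Perm (Fin n) =>
        (Nat.Coprime (orderOf π) m ∧ Function.minimalPeriod ⇑π z = k)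
        ∧ (fun i : Fin (k-1) => (π ^ ((i : ℕ)+1)) z) = t)).card
      = (Finset.univ.filter (fun σ : Equiv.Perm {x : Fin n // x ∉ l} =>
          Nat.Coprime (orderOf σ) m)).card := by
    refine (Finset.card_bij (fun σ _ => c * Equiv.Perm.ofSubtype σ) ?_ ?_ ?_).symm
    · intro σ hσ
      simp only [Finset.mem_filter, Finset.mem_univ, true_and] at hσ ⊢
      refine ⟨⟨?_, hmp σ⟩, ?_⟩
      · rw [hord σ]
        exact Nat.Coprime.coprime_dvd_left (Nat.lcm_dvd_mul k _) (hkm.mul hσ)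
      · funext i
        rw [hπw σ ((i : ℕ) + 1), hw_t i]
    · intro σ₁ _ σ₂ _ h
      exact ofSubtype_inj (mul_left_cancel h)
    · intro π hπmem
      simp only [Finset.mem_filter, Finset.mem_univ, true_and] at hπmem
      obtain ⟨⟨hcop, hmpπ⟩, htup⟩ := hπmem
      have hπi : ∀ i, i < k → (π ^ i) z = w i := by
        intro i hi
        match i with
        | 0 => rw [pow_zero, hw0]; rfl
        | (j+1) =>
          have hj : j < k - 1 := by omega
          have h2 := congrFun htup ⟨j, hj⟩
          simp only at h2
          rw [h2, ← hw_t ⟨j, hj⟩]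
      have hπk : (π ^ k) z = z := by
        have h1 := Function.iterate_minimalPeriod (f := ⇑π) (x := z)
        rw [hmpπ, ← Equiv.Perm.coe_pow] at h1
        exact h1
      have hstep : ∀ i, i < k → π (w i) = w (i + 1) := by
        intro i hi
        have h1 : (π ^ (i+1)) z = w (i+1) := by
          rcases Nat.lt_or_ge (i+1) k with h | h
          · exact hπi (i+1) h
          · have hik : i + 1 = k := by omega
            rw [hik, hπk, hwk]
        have h0 : π (w i) = (π^(i+1)) z := by
          rw [← hπi i hi, ← Equiv.Perm.mul_apply, ← pow_succ']
        rw [h0, h1]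
      have hl_to : ∀ x ∈ l, π x ∈ l := by
        intro x hx
        obtain ⟨i, hi, rfl⟩ := hmem_w x hx
        rw [hstep i hi]; exact hwmem _
      have hl_from : ∀ x, x ∉ l → π x ∉ l := by
        intro x hx hπx
        obtain ⟨i, hi, hxi⟩ := hmem_w _ hπx
        cases i with
        | zero =>
          have h5 : π (w (k-1)) = w k := by
            have h6 := hstep (k-1) (by omega)
            rwa [show k - 1 + 1 = k by omega] at h6
          have h3 : π x = π (w (k-1)) := by rw [hxi, hw0, ← hwk, ← h5]
          have h4 := π.injective h3
          exact hx (by rw [h4]; exact hwmem (k-1))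
        | succ j =>
          have h3 : π x = π (w j) := by rw [hxi, ← hstep j (by omega)]
          have h4 := π.injective h3
          exact hx (by rw [h4]; exact hwmem j)
      have hiff : ∀ x : Fin n, x ∉ l ↔ π x ∉ l :=
        fun x => ⟨hl_from x, fun h hx => h (hl_to x hx)⟩
      set σ := π.subtypePerm (p := fun x => x ∉ l) (fun x => (hiff x).symm) with hσdef
      have heq : c * Equiv.Perm.ofSubtype σ = π := by
        ext x
        rw [Equiv.Perm.mul_apply]
        by_cases hx : x ∈ l
        · rw [Equiv.Perm.ofSubtype_apply_of_not_mem σ (not_not_intro hx)]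
          obtain ⟨i, hi, rfl⟩ := hmem_w x hx
          rw [hw_c i, hstep i hi]
        · have h1 : Equiv.Perm.ofSubtype σ x = π x := by
            rw [Equiv.Perm.ofSubtype_apply_of_mem σ hx]
            rfl
          rw [h1, hc, List.formPerm_apply_of_notMem (hl_from x hx)]
      refine ⟨σ, ?_, heq⟩
      simp only [Finset.mem_filter, Finset.mem_univ, true_and]
      have h2 : orderOf π = Nat.lcm k (orderOf σ) := by rw [← heq, hord σ]
      rw [h2] at hcop
      exact Nat.Coprime.coprime_dvd_left (Nat.dvd_lcm_right _ _) hcop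
  rw [key, filter_coprime_card_eq hsub]

lemma card_tuples (n k : ℕ) (hn : 1 ≤ n) (hk : 1 ≤ k) (hkn : k ≤ n) :
    (Finset.univ.filter (fun t : Fin (k-1) → Fin n =>
      Function.Injective t ∧ ∀ i, t i ≠ (⟨0, hn⟩ : Fin n))).card
      = Nat.factorial (n-1) / Nat.factorial (n-k) := by
  classical
  rw [show n - k = n - 1 - (k - 1) by omega,
    ← Nat.descFactorial_eq_div (by omega : k - 1 ≤ n - 1)]
  have hcard : Fintype.card {x : Fin n // x ≠ (⟨0, hn⟩ : Fin n)} = n - 1 := by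
    simp only [ne_eq]
    rw [Fintype.card_subtype_compl, Fintype.card_fin, Fintype.card_subtype_eq]
  have hemb : Fintype.card (Fin (k-1) ↪ {x : Fin n // x ≠ (⟨0, hn⟩ : Fin n)})
      = (n-1).descFactorial (k-1) := by
    rw [Fintype.card_embedding_eq, hcard, Fintype.card_fin]
  rw [← hemb, ← Finset.card_univ]
  refine (Finset.card_bij (fun (e : Fin (k-1) ↪ {x : Fin n // x ≠ (⟨0, hn⟩ : Fin n)}) _ =>
    fun i => (e i : Fin n)) ?_ ?_ ?_).symm
  · intro e _
    simp only [Finset.mem_filter, Finset.mem_univ, true_and]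
    exact ⟨Subtype.coe_injective.comp e.injective, fun i => (e i).2⟩
  · intro e₁ _ e₂ _ h
    exact Function.Embedding.ext fun i => Subtype.ext (by simpa using congrFun h i)
  · intro t ht
    simp only [Finset.mem_filter, Finset.mem_univ, true_and] at ht
    refine ⟨⟨fun i => ⟨t i, ht.2 i⟩, fun a b hab => ht.1 (by simpa using hab)⟩,
      Finset.mem_univ _, rfl⟩

lemma Bk_card {n m k : ℕ} (hn : 1 ≤ n) (hk : 1 ≤ k) (hkn : k ≤ n) (hkm : Nat.Coprime k m) :
    (Finset.univ.filter (fun π : Equiv.Perm (Fin n) =>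
        Nat.Coprime (orderOf π) m ∧ Function.minimalPeriod ⇑π ⟨0, hn⟩ = k)).card
      = Nat.factorial (n-1) / Nat.factorial (n-k) * Rcard (n - k) m := by
  classical
  have hmemT : ∀ π ∈ Finset.univ.filter (fun π : Equiv.Perm (Fin n) =>
        Nat.Coprime (orderOf π) m ∧ Function.minimalPeriod ⇑π ⟨0, hn⟩ = k),
      (fun i : Fin (k-1) => (π ^ ((i:ℕ)+1)) (⟨0, hn⟩ : Fin n)) ∈
        Finset.univ.filter (fun t : Fin (k-1) → Fin n =>
          Function.Injective t ∧ ∀ i, t i ≠ (⟨0, hn⟩ : Fin n)) := by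
    intro π hπ
    simp only [Finset.mem_filter, Finset.mem_univ, true_and] at hπ ⊢
    obtain ⟨hcop, hmpπ⟩ := hπ
    have hinj := Function.iterate_injOn_Iio_minimalPeriod (f := ⇑π) (x := ⟨0, hn⟩)
    rw [hmpπ] at hinj
    constructor
    · intro a b hab
      have h1 : ((a : ℕ) + 1 : ℕ) = (b : ℕ) + 1 := by
        refine hinj (by simp; omega) (by simp; omega) ?_
        show (⇑π)^[(a : ℕ)+1] _ = (⇑π)^[(b : ℕ)+1] _
        rw [← Equiv.Perm.coe_pow, ← Equiv.Perm.coe_pow]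
        exact hab
      exact Fin.ext (by omega)
    · intro i hi
      have h1 : ((i : ℕ) + 1 : ℕ) = 0 := by
        refine hinj (by simp; omega) (by simp; omega) ?_
        show (⇑π)^[(i : ℕ)+1] _ = (⇑π)^[0] _
        rw [← Equiv.Perm.coe_pow]
        simpa using hi
      omega
  rw [Finset.card_eq_sum_card_fiberwise hmemT]
  have hfib : ∀ t ∈ Finset.univ.filter (fun t : Fin (k-1) → Fin n =>
      Function.Injective t ∧ ∀ i, t i ≠ (⟨0, hn⟩ : Fin n)),
      ((Finset.univ.filter (fun π : Equiv.Perm (Fin n) =>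
        Nat.Coprime (orderOf π) m ∧ Function.minimalPeriod ⇑π ⟨0, hn⟩ = k)).filter
        (fun π => (fun i : Fin (k-1) => (π ^ ((i:ℕ)+1)) (⟨0, hn⟩ : Fin n)) = t)).card
      = Rcard (n - k) m := by
    intro t ht
    simp only [Finset.mem_filter, Finset.mem_univ, true_and] at ht
    rw [Finset.filter_filter]
    exact fiber_card hn hk hkn t ht.1 ht.2 hkm
  rw [Finset.sum_congr rfl hfib, Finset.sum_const, smul_eq_mul,
    card_tuples n k hn hk hkn]

theorem stmt_5 (n m : ℕ) (hm : 0 < m) (hn : 1 ≤ n) :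
    Rcard n m =
      ∑ k ∈ (Finset.Icc 1 n).filter (fun k => Nat.Coprime k m),
        Nat.factorial (n - 1) / Nat.factorial (n - k) * Rcard (n - k) m := by
  classical
  have hmem : ∀ π ∈ Finset.univ.filter (fun π : Equiv.Perm (Fin n) =>
        Nat.Coprime (orderOf π) m),
      Function.minimalPeriod ⇑π (⟨0, hn⟩ : Fin n) ∈
        (Finset.Icc 1 n).filter (fun k => Nat.Coprime k m) := by
    intro π hπ
    simp only [Finset.mem_filter, Finset.mem_univ, true_and, Finset.mem_Icc] at hπ ⊢
    have hper : Function.IsPeriodicPt ⇑π (orderOf π) (⟨0, hn⟩ : Fin n) := by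
      show (⇑π)^[orderOf π] _ = _
      rw [← Equiv.Perm.coe_pow, pow_orderOf_eq_one]
      rfl
    have hopos : 0 < orderOf π := orderOf_pos π
    have hpos := hper.minimalPeriod_pos hopos
    have hdvd := hper.minimalPeriod_dvd
    refine ⟨⟨hpos, ?_⟩, Nat.Coprime.coprime_dvd_left hdvd hπ⟩
    have hle : (Finset.range (Function.minimalPeriod ⇑π (⟨0, hn⟩ : Fin n))).card
        ≤ (Finset.univ : Finset (Fin n)).card :=
      Finset.card_le_card_of_injOn (fun i => (⇑π)^[i] (⟨0, hn⟩ : Fin n))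
        (fun _ _ => Finset.mem_univ _)
        (fun a ha b hb hab => Function.iterate_injOn_Iio_minimalPeriod
          (by simpa using ha) (by simpa using hb) hab)
    simpa using hle
  rw [show Rcard n m = (Finset.univ.filter (fun π : Equiv.Perm (Fin n) =>
      Nat.Coprime (orderOf π) m)).card from rfl,
    Finset.card_eq_sum_card_fiberwise hmem]
  refine Finset.sum_congr rfl ?_
  intro k hk
  simp only [Finset.mem_filter, Finset.mem_Icc] at hk
  rw [Finset.filter_filter]
  exact Bk_card hn hk.1.1 hk.1.2 hk.2
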